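/- Let A ∈ ℝ^{m×n} and L ⊆ {1,…,m}. Suppose 𝓕 ⊆ S(A) and 𝓘 ⊆ 2^{{1,…,m}} \ S(A) are such that for every J ⊆ {1,…,m}, either J ⊆ F for some F ∈ 𝓕, or I ⊆ J for some I ∈ 𝓘. Then H(A|L) = max_{F∈𝓕} H_F(A|L). -/
import Mathlib


open Matrix Metric

/-- `J ⊆ {1,…,m}` is `A`-surjective: `A_J ℝ^n + ℝ^J_+ = ℝ^J`. -/
def ASurj {m n : ℕ} (A : Matrix (Fin m) (Fin n) ℝ) (J : Set (Fin m)) : Prop :=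
  ∀ w : Fin m → ℝ, ∃ x : Fin n → ℝ, ∀ i ∈ J, A.mulVec x i ≤ w i

/-- `H_J(A|L) = max_{y ∈ ℝ^L, ‖y‖ ≤ 1} min{‖x‖ : A_J x ≤ y_J}`, with the
convention `y_j = 0` for `j ∉ L`. -/
noncomputable def HJL {m n : ℕ} (A : Matrix (Fin m) (Fin n) ℝ) (L J : Set (Fin m)) : ℝ :=
  sSup {t | ∃ y : Fin m → ℝ, (∀ i ∉ L, y i = 0) ∧ ‖y‖ ≤ 1 ∧
    t = sInf {r | ∃ x : Fin n → ℝ, (∀ i ∈ J, A.mulVec x i ≤ y i) ∧ r = ‖x‖}}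

/-- The Hoffman constant `H(A|L) = max_{J ∈ S(A)} H_J(A|L)`. -/
noncomputable def HoffAL {m n : ℕ} (A : Matrix (Fin m) (Fin n) ℝ) (L : Set (Fin m)) : ℝ :=
  sSup {t | ∃ J : Set (Fin m), ASurj A J ∧ t = HJL A L J}

/-- The dual norm `‖v‖* = max_{‖x‖ ≤ 1} ⟨v, x⟩`. -/
noncomputable def dualNorm {d : ℕ} (v : Fin d → ℝ) : ℝ :=
  sSup {t | ∃ x : Fin d → ℝ, ‖x‖ ≤ 1 ∧ t = ∑ i, v i * x i}

/-- `dist_L(b, S) = inf{‖b − y‖ : y ∈ S, (b − y)_{L^c} = 0}`. -/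
noncomputable def distL {m : ℕ} (L : Set (Fin m)) (b : Fin m → ℝ)
    (S : Set (Fin m → ℝ)) : ℝ :=
  sInf {r | ∃ y ∈ S, (∀ i ∉ L, b i - y i = 0) ∧ r = ‖b - y‖}

namespace HoffAux

variable {m n : ℕ} (A : Matrix (Fin m) (Fin n) ℝ) (L J : Set (Fin m))

/-- The inner feasible-norm set. -/
def Sy (y : Fin m → ℝ) : Set ℝ :=
  {r | ∃ x : Fin n → ℝ, (∀ i ∈ J, A.mulVec x i ≤ y i) ∧ r = ‖x‖}

/-- The outer set whose supremum is `HJL`. -/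
def T : Set ℝ :=
  {t | ∃ y : Fin m → ℝ, (∀ i ∉ L, y i = 0) ∧ ‖y‖ ≤ 1 ∧ t = sInf (Sy A J y)}

lemma hjl_eq : HJL A L J = sSup (T A L J) := rfl

lemma asurj_mono {A : Matrix (Fin m) (Fin n) ℝ} {J K : Set (Fin m)}
    (h : J ⊆ K) (hK : ASurj A K) : ASurj A J := fun w => by
  obtain ⟨x, hx⟩ := hK w
  exact ⟨x, fun i hi => hx i (h hi)⟩

lemma asurj_empty : ASurj A (∅ : Set (Fin m)) :=
  fun _ => ⟨0, fun i hi => absurd hi (Set.notMem_empty i)⟩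

lemma Sy_bddBelow (y : Fin m → ℝ) : BddBelow (Sy A J y) :=
  ⟨0, fun r ⟨x, _, hr⟩ => hr ▸ norm_nonneg x⟩

lemma Sy_nonempty (h : ASurj A J) (y : Fin m → ℝ) : (Sy A J y).Nonempty := by
  obtain ⟨x, hx⟩ := h y
  exact ⟨‖x‖, x, hx, rfl⟩

lemma sInf_Sy_nonneg (y : Fin m → ℝ) : 0 ≤ sInf (Sy A J y) :=
  Real.sInf_nonneg (fun r ⟨x, _, hr⟩ => hr ▸ norm_nonneg x)

lemma T_bddAbove (h : ASurj A J) : BddAbove (T A L J) := by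
  obtain ⟨x0, hx0⟩ := h (fun _ => -1)
  refine ⟨‖x0‖, ?_⟩
  rintro t ⟨y, _, hy1, rfl⟩
  have hmem : ‖x0‖ ∈ Sy A J y := by
    refine ⟨x0, fun i hi => (hx0 i hi).trans ?_, rfl⟩
    have : |y i| ≤ 1 := by
      have := norm_le_pi_norm y i
      rw [Real.norm_eq_abs] at this
      linarith
    linarith [(abs_le.mp this).1]
  exact csInf_le (Sy_bddBelow A J y) hmem

lemma hjl_nonneg (h : ASurj A J) : 0 ≤ HJL A L J := by
  rw [hjl_eq]
  have hmem : sInf (Sy A J 0) ∈ T A L J := ⟨0, fun _ _ => rfl, by simp, rfl⟩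
  exact le_trans (sInf_Sy_nonneg A J 0) (le_csSup (T_bddAbove A L J h) hmem)

lemma hjl_mono {J F' : Set (Fin m)} (hJF : J ⊆ F') (hF' : ASurj A F') :
    HJL A L J ≤ HJL A L F' := by
  rw [hjl_eq, hjl_eq]
  apply Real.sSup_le
  · rintro t ⟨y, hy0, hy1, rfl⟩
    have h1 : sInf (Sy A J y) ≤ sInf (Sy A F' y) := by
      refine csInf_le_csInf (Sy_bddBelow A J y) (Sy_nonempty A F' hF' y) ?_
      rintro r ⟨x, hx, rfl⟩
      exact ⟨x, fun i hi => hx i (hJF hi), rfl⟩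
    have h2 : sInf (Sy A F' y) ∈ T A L F' := ⟨y, hy0, hy1, rfl⟩
    exact h1.trans (le_csSup (T_bddAbove A L F' hF') h2)
  · rw [← hjl_eq]; exact hjl_nonneg A L F' hF'

end HoffAux

open HoffAux in
/-- Corollary 2: if `𝓕 ⊆ S(A)` and `𝓘 ⊆ 2^{1..m} \ S(A)` jointly
certify all subsets of `{1,…,m}`, then `H(A|L) = max_{F ∈ 𝓕} H_F(A|L)`. -/
theorem hoffman_certificates_rest {m n : ℕ} (A : Matrix (Fin m) (Fin n) ℝ)
    (L : Set (Fin m)) (F I : Set (Set (Fin m)))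
    (hF : ∀ J ∈ F, ASurj A J) (hI : ∀ J ∈ I, ¬ ASurj A J)
    (hcover : ∀ J : Set (Fin m), (∃ F' ∈ F, J ⊆ F') ∨ (∃ I' ∈ I, I' ⊆ J)) :
    HoffAL A L = sSup {t | ∃ F' ∈ F, t = HJL A L F'} := by
  have hFne : ∃ F0, F0 ∈ F := by
    rcases hcover ∅ with ⟨F', hF', _⟩ | ⟨I', hI', hsub⟩
    · exact ⟨F', hF'⟩
    · exact absurd (asurj_mono hsub (asurj_empty A)) (hI I' hI')
  obtain ⟨F0, hF0⟩ := hFne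
  have hS2fin : ({t | ∃ F' ∈ F, t = HJL A L F'}).Finite :=
    Set.Finite.subset (Set.finite_range (HJL A L)) (by rintro t ⟨J, _, rfl⟩; exact ⟨J, rfl⟩)
  have hS1fin : ({t | ∃ J, ASurj A J ∧ t = HJL A L J}).Finite :=
    Set.Finite.subset (Set.finite_range (HJL A L)) (by rintro t ⟨J, _, rfl⟩; exact ⟨J, rfl⟩)
  apply le_antisymm
  · apply Real.sSup_le
    · rintro t ⟨J, hJ, rfl⟩
      rcases hcover J with ⟨F', hF'mem, hJF⟩ | ⟨I', hI'mem, hsub⟩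
      · exact (hjl_mono A L hJF (hF F' hF'mem)).trans
          (le_csSup hS2fin.bddAbove ⟨F', hF'mem, rfl⟩)
      · exact absurd (asurj_mono hsub hJ) (hI I' hI'mem)
    · exact le_trans (hjl_nonneg A L F0 (hF F0 hF0))
        (le_csSup hS2fin.bddAbove ⟨F0, hF0, rfl⟩)
  · refine csSup_le_csSup hS1fin.bddAbove ⟨HJL A L F0, F0, hF0, rfl⟩ ?_
    rintro t ⟨F', hF', rfl⟩
    exact ⟨F', hF F' hF', rfl⟩
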